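/- For fixed d > 0 and rectangle dimensions A_x, A_z, the SNR objective γ(p,q) = Σ_{x ∈ {A_x/2 ± p}} Σ_{z ∈ {A_z/2 ± q}} arctan(xz/(d√(d² + x² + z²))) attained over p ∈ [r Φ − (L_x−A_x)/2, rΦ + (L_x−A_x)/2] (similarly q) is maximized by choosing the center (r_x, r_z) as the point of the feasible box closest to (rΦ, rΘ) (nearest-neighbor criterion). -/

import Mathlib

/-- Sum over the four corners `x ∈ {A_x/2 ± p}`, `z ∈ {A_z/2 ± q}` of
`arctan(xz/(d·√(d² + x² + z²)))`, with `p, q` the offsets of the user's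
projection from the aperture center. -/
noncomputable def cornerSum (d Ax Az p q : ℝ) : ℝ :=
  Real.arctan ((Ax / 2 + p) * (Az / 2 + q) /
      (d * Real.sqrt (d ^ 2 + (Ax / 2 + p) ^ 2 + (Az / 2 + q) ^ 2))) +
  Real.arctan ((Ax / 2 + p) * (Az / 2 - q) /
      (d * Real.sqrt (d ^ 2 + (Ax / 2 + p) ^ 2 + (Az / 2 - q) ^ 2))) +
  Real.arctan ((Ax / 2 - p) * (Az / 2 + q) /
      (d * Real.sqrt (d ^ 2 + (Ax / 2 - p) ^ 2 + (Az / 2 + q) ^ 2))) +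
  Real.arctan ((Ax / 2 - p) * (Az / 2 - q) /
      (d * Real.sqrt (d ^ 2 + (Ax / 2 - p) ^ 2 + (Az / 2 - q) ^ 2)))

/-- The point of `[lo, hi]` closest to `c`. -/
noncomputable def clamp (lo hi c : ℝ) : ℝ := max lo (min hi c)

lemma sqrt_pos_of (A : ℝ) (hA : 0 < A) (t : ℝ) : 0 < Real.sqrt (A + t^2) :=
  Real.sqrt_pos.mpr (by positivity)

/-- derivative of φ(t) = t/(A·√(A+t²)) is 1/((A+t²)·√(A+t²)). -/

lemma hasDerivAt_phi (A : ℝ) (hA : 0 < A) (t : ℝ) :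
    HasDerivAt (fun t : ℝ => t / (A * Real.sqrt (A + t ^ 2)))
      (1 / ((A + t ^ 2) * Real.sqrt (A + t ^ 2))) t := by
  have hAt : (0:ℝ) < A + t ^ 2 := by positivity
  have hs : 0 < Real.sqrt (A + t ^ 2) := Real.sqrt_pos.mpr hAt
  have hsq : Real.sqrt (A + t ^ 2) ^ 2 = A + t ^ 2 := Real.sq_sqrt hAt.le
  have h1 : HasDerivAt (fun t : ℝ => A + t ^ 2) (2 * t) t := by
    simpa using ((hasDerivAt_pow 2 t).const_add A)
  have h2 : HasDerivAt (fun t : ℝ => Real.sqrt (A + t ^ 2))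
      (2 * t / (2 * Real.sqrt (A + t ^ 2))) t := h1.sqrt hAt.ne'
  have h3 : HasDerivAt (fun t : ℝ => A * Real.sqrt (A + t ^ 2))
      (A * (2 * t / (2 * Real.sqrt (A + t ^ 2)))) t := h2.const_mul A
  have h4 : HasDerivAt (fun t : ℝ => t / (A * Real.sqrt (A + t ^ 2))) _ t :=
    (hasDerivAt_id t).div h3 (by positivity)
  convert h4 using 1
  simp only [id]
  field_simp
  linear_combination (-t^2) * hsq

lemma psi_mono (A A' : ℝ) (hA : 0 < A) (hAA' : A ≤ A') :
    Monotone (fun t : ℝ => t / (A * Real.sqrt (A + t ^ 2))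
      - t / (A' * Real.sqrt (A' + t ^ 2))) := by
  have hA' : 0 < A' := lt_of_lt_of_le hA hAA'
  have hdiff : ∀ t : ℝ, HasDerivAt (fun t : ℝ => t / (A * Real.sqrt (A + t ^ 2))
      - t / (A' * Real.sqrt (A' + t ^ 2)))
      (1 / ((A + t ^ 2) * Real.sqrt (A + t ^ 2))
        - 1 / ((A' + t ^ 2) * Real.sqrt (A' + t ^ 2))) t :=
    fun t => (hasDerivAt_phi A hA t).sub (hasDerivAt_phi A' hA' t)
  apply monotone_of_deriv_nonneg
  · exact fun t => ((hdiff t).differentiableAt)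
  · intro t
    rw [(hdiff t).deriv]
    have h1 : (0:ℝ) < A + t ^ 2 := by positivity
    have h2 : (0:ℝ) < A' + t ^ 2 := by positivity
    have hle : (A + t ^ 2) * Real.sqrt (A + t ^ 2)
        ≤ (A' + t ^ 2) * Real.sqrt (A' + t ^ 2) := by
      have : A + t ^ 2 ≤ A' + t ^ 2 := by linarith
      exact mul_le_mul this (Real.sqrt_le_sqrt this) (Real.sqrt_nonneg _) h2.le
    have := one_div_le_one_div_of_le (by positivity) hle
    linarith

lemma hasDerivAt_corner (d z : ℝ) (hd : 0 < d) (x : ℝ) :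
    HasDerivAt (fun x : ℝ => Real.arctan (x * z / (d * Real.sqrt (d ^ 2 + x ^ 2 + z ^ 2))))
      (d * z / ((d ^ 2 + x ^ 2) * Real.sqrt (d ^ 2 + x ^ 2 + z ^ 2))) x := by
  have hS : (0:ℝ) < d ^ 2 + x ^ 2 + z ^ 2 := by positivity
  have hs : 0 < Real.sqrt (d ^ 2 + x ^ 2 + z ^ 2) := Real.sqrt_pos.mpr hS
  have hsq : Real.sqrt (d ^ 2 + x ^ 2 + z ^ 2) ^ 2 = d ^ 2 + x ^ 2 + z ^ 2 :=
    Real.sq_sqrt hS.le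
  have h1 : HasDerivAt (fun x : ℝ => d ^ 2 + x ^ 2 + z ^ 2) (2 * x) x := by
    simpa using (((hasDerivAt_pow 2 x).const_add (d ^ 2)).add_const (z ^ 2))
  have h2 : HasDerivAt (fun x : ℝ => Real.sqrt (d ^ 2 + x ^ 2 + z ^ 2))
      (2 * x / (2 * Real.sqrt (d ^ 2 + x ^ 2 + z ^ 2))) x := h1.sqrt hS.ne'
  have h3 : HasDerivAt (fun x : ℝ => d * Real.sqrt (d ^ 2 + x ^ 2 + z ^ 2))
      (d * (2 * x / (2 * Real.sqrt (d ^ 2 + x ^ 2 + z ^ 2)))) x := h2.const_mul d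
  have h4 : HasDerivAt (fun x : ℝ => x * z) z x := by
    simpa using (hasDerivAt_id x).mul_const z
  have h5 : HasDerivAt
      (fun x : ℝ => Real.arctan (x * z / (d * Real.sqrt (d ^ 2 + x ^ 2 + z ^ 2)))) _ x :=
    (h4.div h3 (by positivity)).arctan
  convert h5 using 1
  simp only [Pi.div_apply]
  field_simp
  linear_combination (-z*x^2) * hsq

lemma cornerSum_neg_p (d Ax Az p q : ℝ) :
    cornerSum d Ax Az (-p) q = cornerSum d Ax Az p q := by
  unfold cornerSum
  ring_nf

lemma cornerSum_swap (d Ax Az p q : ℝ) :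
    cornerSum d Ax Az p q = cornerSum d Az Ax q p := by
  unfold cornerSum
  ring_nf

/-- ψ-term as φ : `d*z/((d²+x²)√(d²+x²+z²)) = d * φ_{d²+x²}(z)`. -/

lemma term_eq_phi (d x z : ℝ) :
    d * z / ((d ^ 2 + x ^ 2) * Real.sqrt (d ^ 2 + x ^ 2 + z ^ 2))
      = d * (z / ((d ^ 2 + x ^ 2) * Real.sqrt ((d ^ 2 + x ^ 2) + z ^ 2))) := by
  rw [add_assoc]
  ring

lemma hasDerivAt_cornerSum_p (d Ax Az q : ℝ) (hd : 0 < d) (p : ℝ) :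
    HasDerivAt (fun p => cornerSum d Ax Az p q)
      ((d * (Az / 2 + q) / ((d ^ 2 + (Ax / 2 + p) ^ 2) *
          Real.sqrt (d ^ 2 + (Ax / 2 + p) ^ 2 + (Az / 2 + q) ^ 2))
        + d * (Az / 2 - q) / ((d ^ 2 + (Ax / 2 + p) ^ 2) *
          Real.sqrt (d ^ 2 + (Ax / 2 + p) ^ 2 + (Az / 2 - q) ^ 2)))
      - (d * (Az / 2 + q) / ((d ^ 2 + (Ax / 2 - p) ^ 2) *
          Real.sqrt (d ^ 2 + (Ax / 2 - p) ^ 2 + (Az / 2 + q) ^ 2))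
        + d * (Az / 2 - q) / ((d ^ 2 + (Ax / 2 - p) ^ 2) *
          Real.sqrt (d ^ 2 + (Ax / 2 - p) ^ 2 + (Az / 2 - q) ^ 2)))) p := by
  have hplus : HasDerivAt (fun p : ℝ => Ax / 2 + p) 1 p := by
    simpa using (hasDerivAt_id p).const_add (Ax / 2)
  have hminus : HasDerivAt (fun p : ℝ => Ax / 2 - p) (-1) p := by
    simpa using ((hasDerivAt_id p).const_sub (Ax / 2))
  have t1 := (hasDerivAt_corner d (Az / 2 + q) hd (Ax / 2 + p)).comp p hplus
  have t2 := (hasDerivAt_corner d (Az / 2 - q) hd (Ax / 2 + p)).comp p hplus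
  have t3 := (hasDerivAt_corner d (Az / 2 + q) hd (Ax / 2 - p)).comp p hminus
  have t4 := (hasDerivAt_corner d (Az / 2 - q) hd (Ax / 2 - p)).comp p hminus
  have : HasDerivAt (fun p => cornerSum d Ax Az p q) _ p := ((t1.add t2).add t3).add t4
  convert this using 1
  ring

lemma cornerSum_anti_p (d Ax Az q : ℝ) (hd : 0 < d) (hAx : 0 ≤ Ax) (hAz : 0 ≤ Az) :
    AntitoneOn (fun p => cornerSum d Ax Az p q) (Set.Ici 0) := by
  apply antitoneOn_of_deriv_nonpos (convex_Ici 0)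
  · exact (Differentiable.continuous
      (fun p => (hasDerivAt_cornerSum_p d Ax Az q hd p).differentiableAt)).continuousOn
  · exact fun p _ => ((hasDerivAt_cornerSum_p d Ax Az q hd p).differentiableAt).differentiableWithinAt
  · intro p hp
    rw [interior_Ici] at hp
    rw [(hasDerivAt_cornerSum_p d Ax Az q hd p).deriv]
    set z₁ := Az / 2 + q with hz₁
    set z₂ := Az / 2 - q with hz₂
    set X := Ax / 2 + p with hX
    set Y := Ax / 2 - p with hY
    set A := d ^ 2 + Y ^ 2 with hA
    set A' := d ^ 2 + X ^ 2 with hA'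
    have hApos : 0 < A := by positivity
    have hAA' : A ≤ A' := by
      have : 0 ≤ (Ax / 2) * p := mul_nonneg (by linarith) (le_of_lt hp)
      simp only [hA, hA', hX, hY]
      nlinarith
    have hz : -z₂ ≤ z₁ := by simp only [hz₁, hz₂]; linarith
    have hmono := psi_mono A A' hApos hAA' hz
    simp only [neg_sq, neg_div] at hmono
    simp only [mul_div_assoc]
    have hscaled := mul_le_mul_of_nonneg_left hmono hd.le
    nlinarith [hscaled]

lemma cornerSum_abs_p (d Ax Az p q : ℝ) :
    cornerSum d Ax Az |p| q = cornerSum d Ax Az p q := by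
  rcases abs_cases p with ⟨h, _⟩ | ⟨h, _⟩
  · rw [h]
  · rw [h, cornerSum_neg_p]

lemma cornerSum_le_p (d Ax Az : ℝ) (hd : 0 < d) (hAx : 0 ≤ Ax) (hAz : 0 ≤ Az)
    {p p' : ℝ} (q : ℝ) (h : |p'| ≤ |p|) :
    cornerSum d Ax Az p q ≤ cornerSum d Ax Az p' q := by
  rw [← cornerSum_abs_p d Ax Az p q, ← cornerSum_abs_p d Ax Az p' q]
  exact cornerSum_anti_p d Ax Az q hd hAx hAz (abs_nonneg p') (abs_nonneg p) h

lemma cornerSum_le_q (d Ax Az : ℝ) (hd : 0 < d) (hAx : 0 ≤ Ax) (hAz : 0 ≤ Az)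
    (p : ℝ) {q q' : ℝ} (h : |q'| ≤ |q|) :
    cornerSum d Ax Az p q ≤ cornerSum d Ax Az p q' := by
  rw [cornerSum_swap d Ax Az p q, cornerSum_swap d Ax Az p q']
  exact cornerSum_le_p d Az Ax hd hAz hAx p h

lemma clamp_mem (lo hi c : ℝ) (h : lo ≤ hi) : clamp lo hi c ∈ Set.Icc lo hi :=
  ⟨le_max_left _ _, max_le h (min_le_left _ _)⟩

lemma clamp_closest (lo hi c : ℝ) (h : lo ≤ hi) {r : ℝ} (hr : r ∈ Set.Icc lo hi) :
    |c - clamp lo hi c| ≤ |c - r| := by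
  obtain ⟨hr1, hr2⟩ := hr
  unfold clamp
  rcases le_total c lo with h1 | h1
  · rw [min_eq_right (h1.trans h), max_eq_left h1,
      abs_of_nonpos (by linarith), abs_of_nonpos (by linarith)]
    linarith
  · rcases le_total hi c with h2 | h2
    · rw [min_eq_left h2, max_eq_right h,
        abs_of_nonneg (by linarith), abs_of_nonneg (by linarith)]
      linarith
    · rw [min_eq_right h2, max_eq_right h1, sub_self, abs_zero]
      exact abs_nonneg _

/-- Theorem 1 (nearest-neighbor criterion): over aperture centers
`(r_x, r_z)` in the feasible box
`[(A_x−L_x)/2, (L_x−A_x)/2] × [(A_z−L_z)/2, (L_z−A_z)/2]`, the LoS SNR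
objective `γ(rΦ − r_x, rΘ − r_z)` is maximized by taking `(r_x, r_z)` to be
the point of the feasible box closest to the user projection `(rΦ, rΘ)`. -/
theorem stmt7 (d Ax Az Lx Lz u v : ℝ) (hd : 0 < d) (hAx : 0 < Ax)
    (hAz : 0 < Az) (hxL : Ax ≤ Lx) (hzL : Az ≤ Lz) :
    clamp ((Ax - Lx) / 2) ((Lx - Ax) / 2) u ∈
      Set.Icc ((Ax - Lx) / 2) ((Lx - Ax) / 2) ∧
    clamp ((Az - Lz) / 2) ((Lz - Az) / 2) v ∈
      Set.Icc ((Az - Lz) / 2) ((Lz - Az) / 2) ∧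
    ∀ rx ∈ Set.Icc ((Ax - Lx) / 2) ((Lx - Ax) / 2),
      ∀ rz ∈ Set.Icc ((Az - Lz) / 2) ((Lz - Az) / 2),
        cornerSum d Ax Az (u - rx) (v - rz) ≤
          cornerSum d Ax Az (u - clamp ((Ax - Lx) / 2) ((Lx - Ax) / 2) u)
            (v - clamp ((Az - Lz) / 2) ((Lz - Az) / 2) v) := by
  have hx : (Ax - Lx) / 2 ≤ (Lx - Ax) / 2 := by linarith
  have hz : (Az - Lz) / 2 ≤ (Lz - Az) / 2 := by linarith
  refine ⟨clamp_mem _ _ _ hx, clamp_mem _ _ _ hz, ?_⟩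
  intro rx hrx rz hrz
  calc cornerSum d Ax Az (u - rx) (v - rz)
      ≤ cornerSum d Ax Az (u - clamp ((Ax - Lx) / 2) ((Lx - Ax) / 2) u) (v - rz) :=
        cornerSum_le_p d Ax Az hd hAx.le hAz.le _ (clamp_closest _ _ _ hx hrx)
    _ ≤ cornerSum d Ax Az (u - clamp ((Ax - Lx) / 2) ((Lx - Ax) / 2) u)
          (v - clamp ((Az - Lz) / 2) ((Lz - Az) / 2) v) :=
        cornerSum_le_q d Ax Az hd hAx.le hAz.le _ (clamp_closest _ _ _ hz hrz)
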